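/- Let 0 < q < 1 and let (θ_n)_{n∈ℕ} be a sequence of nonnegative real numbers converging to a limit θ ≥ 0. Then the finite products ∏_{i=0}^{n-1} (1 + θ_n q^i) converge, as n → ∞, to the infinite product E_q(θ) = ∏_{i=0}^{∞} (1 + θ q^i). -/

import Mathlib

open Filter Finset

lemma log_one_add_sub_le {a b : ℝ} (hb : 0 ≤ b) (hab : b ≤ a) :
    Real.log (1 + a) - Real.log (1 + b) ≤ a - b := by
  have hb1 : (0:ℝ) < 1 + b := by linarith
  have ha1 : (0:ℝ) < 1 + a := by linarith
  rw [← Real.log_div ha1.ne' hb1.ne']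
  have h := Real.log_le_sub_one_of_pos (div_pos ha1 hb1)
  have : (1 + a) / (1 + b) - 1 = (a - b) / (1 + b) := by field_simp; ring
  rw [this] at h
  refine h.trans ?_
  rw [div_le_iff₀ hb1]
  nlinarith

lemma abs_log_one_add_sub {a b : ℝ} (ha : 0 ≤ a) (hb : 0 ≤ b) :
    |Real.log (1 + a) - Real.log (1 + b)| ≤ |a - b| := by
  rcases le_total b a with h | h
  · rw [abs_of_nonneg (by linarith : 0 ≤ a - b),
      abs_of_nonneg (sub_nonneg.2 (Real.log_le_log (by linarith) (by linarith)))]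
    exact log_one_add_sub_le hb h
  · rw [abs_of_nonpos (by linarith : a - b ≤ 0),
      abs_of_nonpos (sub_nonpos.2 (Real.log_le_log (by linarith) (by linarith)))]
    have := log_one_add_sub_le ha h
    linarith

/-- For `0 < q < 1` and a sequence `θ n` of nonnegative reals converging to
`θ ≥ 0`, the finite products `∏_{i=0}^{n-1} (1 + θ n * q^i)` converge, as `n → ∞`, to the
infinite product `E_q(θ) = ∏_{i=0}^{∞} (1 + θ * q^i)`. -/
theorem kemp_lemma_prod (q : ℝ) (hq0 : 0 < q) (hq1 : q < 1)
    (θseq : ℕ → ℝ) (hθnonneg : ∀ n, 0 ≤ θseq n)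
    (θ : ℝ) (hθ : 0 ≤ θ) (hlim : Tendsto θseq atTop (nhds θ)) :
    Tendsto (fun n => ∏ i ∈ range n, (1 + θseq n * q ^ i)) atTop
      (nhds (∏' i : ℕ, (1 + θ * q ^ i))) := by
  have hqpow : ∀ i : ℕ, (0:ℝ) ≤ q ^ i := fun i => (pow_pos hq0 i).le
  have hfpos : ∀ i : ℕ, (0:ℝ) < 1 + θ * q ^ i := fun i => by
    have := mul_nonneg hθ (hqpow i); linarith
  have hgpos : ∀ n i : ℕ, (0:ℝ) < 1 + θseq n * q ^ i := fun n i => by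
    have := mul_nonneg (hθnonneg n) (hqpow i); linarith
  -- summability of logs
  have hgeo : Summable (fun i : ℕ => θ * q ^ i) :=
    (summable_geometric_of_lt_one hq0.le hq1).mul_left θ
  have hsumlog : Summable (fun i : ℕ => Real.log (1 + θ * q ^ i)) := by
    refine Summable.of_nonneg_of_le (fun i => Real.log_nonneg (by
      have := mul_nonneg hθ (hqpow i); linarith)) (fun i => ?_) hgeo
    have := Real.log_le_sub_one_of_pos (hfpos i)
    linarith
  -- HasProd
  have hhp : HasProd (fun i : ℕ => 1 + θ * q ^ i) (∏' i : ℕ, (1 + θ * q ^ i)) := by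
    have h1 := hsumlog.hasSum.rexp
    have h2 : (Real.exp ∘ fun i : ℕ => Real.log (1 + θ * q ^ i)) = fun i => 1 + θ * q ^ i := by
      funext i; simp [Real.exp_log (hfpos i)]
    rw [h2] at h1
    exact h1.multipliable.hasProd
  have hP : Tendsto (fun n => ∏ i ∈ range n, (1 + θ * q ^ i)) atTop
      (nhds (∏' i : ℕ, (1 + θ * q ^ i))) := hhp.tendsto_prod_nat
  -- the difference of log-sums
  set D : ℕ → ℝ := fun n =>
    ∑ i ∈ range n, (Real.log (1 + θseq n * q ^ i) - Real.log (1 + θ * q ^ i)) with hD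
  have hDbound : ∀ n, |D n| ≤ |θseq n - θ| * (1 / (1 - q)) := by
    intro n
    calc |D n| ≤ ∑ i ∈ range n,
        |Real.log (1 + θseq n * q ^ i) - Real.log (1 + θ * q ^ i)| :=
          Finset.abs_sum_le_sum_abs _ _
      _ ≤ ∑ i ∈ range n, |θseq n - θ| * q ^ i := by
          refine Finset.sum_le_sum fun i _ => ?_
          have h1 := abs_log_one_add_sub (mul_nonneg (hθnonneg n) (hqpow i))
            (mul_nonneg hθ (hqpow i))
          calc |Real.log (1 + θseq n * q ^ i) - Real.log (1 + θ * q ^ i)|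
              ≤ |θseq n * q ^ i - θ * q ^ i| := h1
            _ = |θseq n - θ| * q ^ i := by
                rw [← sub_mul, abs_mul, abs_of_nonneg (hqpow i)]
      _ = |θseq n - θ| * ∑ i ∈ range n, q ^ i := by rw [Finset.mul_sum]
      _ ≤ |θseq n - θ| * (1 / (1 - q)) := by
          refine mul_le_mul_of_nonneg_left ?_ (abs_nonneg _)
          rw [geom_sum_eq hq1.ne]
          have heq : (q ^ n - 1) / (q - 1) = (1 - q ^ n) / (1 - q) := by
            rw [div_eq_div_iff (by linarith) (by linarith)]; ring
          rw [heq, div_le_div_iff₀ (by linarith) (by linarith)]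
          have := pow_nonneg hq0.le n
          nlinarith
  have hD0 : Tendsto D atTop (nhds 0) := by
    have hb : Tendsto (fun n => |θseq n - θ| * (1 / (1 - q))) atTop (nhds 0) := by
      have : Tendsto (fun n => θseq n - θ) atTop (nhds 0) := by
        simpa using hlim.sub (tendsto_const_nhds (x := θ))
      simpa using (this.abs.mul_const (1 / (1 - q)))
    exact squeeze_zero_norm hDbound hb
  have hexp : Tendsto (fun n => Real.exp (D n)) atTop (nhds 1) := by
    simpa [Function.comp_def] using (Real.continuous_exp.tendsto 0).comp hD0
  -- identity: A n = P n * exp (D n)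
  have key : ∀ n, ∏ i ∈ range n, (1 + θseq n * q ^ i) =
      (∏ i ∈ range n, (1 + θ * q ^ i)) * Real.exp (D n) := by
    intro n
    rw [hD, Real.exp_sum, ← Finset.prod_mul_distrib]
    refine Finset.prod_congr rfl fun i _ => ?_
    rw [Real.exp_sub, Real.exp_log (hgpos n i), Real.exp_log (hfpos i)]
    field_simp
  have := hP.mul hexp
  rw [mul_one] at this
  exact this.congr fun n => (key n).symm
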